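/- Over the alphabet 3 = {0,1,2}, let T be the words (finite or infinite) all of whose finite prefixes contain at most as many 2s as 1s, let ↩ be the erasing operation on finite words of T (∅^↩ := ∅; (tε)^↩ := t^↩ε for ε ∈ {0,1}; (t2)^↩ := t^↩ with its last 1 replaced by 0), let E := { s ∈ T ∩ 3^{<ω} : s ≠ ∅, s contains equally many 1s and 2s, and (s↾(|s|−1))^↩ begins with the letter 1 }, and let A := {0} ∪ E ∪ { c_0 1 c_1 1 ⋯ c_k 1 : k ∈ ω, each c_j is a finite concatenation of words from {0} ∪ E, and (k > 0 or c_0 ≠ ∅) }. Let e : T ∩ 3^ω → 2^ω be e(α) := lim_n (α↾n)^↩. Then A^ω = e^{-1}(2^ω \ {10^ω}), i.e. the ω-power of A equals the set of α ∈ T ∩ 3^ω whose erasure e(α) is different from the infinite word 1000⋯. -/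

import Mathlib

open Set Classical

/-- The ω-power of a finitary language `V ⊆ α^{<ω}`. -/
def omegaPower {α : Type*} (V : Set (List α)) : Set (ℕ → α) :=
  { x | ∃ f : ℕ → ℕ, f 0 = 0 ∧ StrictMono f ∧
      ∀ k, (List.ofFn fun i : Fin (f (k + 1) - f k) => x (f k + i.val)) ∈ V }

/-- The prefix of length `l` of an infinite word. -/
def wordPrefix {α : Type*} (x : ℕ → α) (l : ℕ) : List α := List.ofFn fun i : Fin l => x i.val

/-- `T ∩ 3^{<ω}`: finite words over `3 = {0,1,2}` all of whose prefixes contain at most as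
many `2`s as `1`s. -/
def Tfin : Set (List (Fin 3)) :=
  { s | ∀ l : ℕ, (s.take l).count 2 ≤ (s.take l).count 1 }

/-- `T ∩ 3^ω`: infinite words over `3 = {0,1,2}` all of whose finite prefixes contain at
most as many `2`s as `1`s. -/
def Tinf : Set (ℕ → Fin 3) :=
  { α | ∀ l : ℕ, (wordPrefix α l).count 2 ≤ (wordPrefix α l).count 1 }

/-- Replace the first occurrence of `1` (i.e. `true`) in a binary word by `0`. -/
def replaceFirstOne : List Bool → List Bool
  | [] => []
  | true :: t => false :: t
  | false :: t => false :: replaceFirstOne t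

/-- Replace the last occurrence of `1` (i.e. `true`) in a binary word by `0`. -/
def replaceLastOne (l : List Bool) : List Bool := (replaceFirstOne l.reverse).reverse

/-- One step of the erasing operation: appending a letter `ε ∈ {0,1}` appends it to the
erased word, while appending the letter `2` replaces the last `1` of the erased word by `0`. -/
def eraseStep (acc : List Bool) (a : Fin 3) : List Bool :=
  if a = 2 then replaceLastOne acc else acc ++ [decide (a = 1)]

/-- The erasing operation `s ↦ s^↩` on finite words over `3 = {0,1,2}` (letters `0`,`1` of
the binary output are encoded as `false`,`true`): `∅^↩ = ∅`, `(tε)^↩ = t^↩ε` for `ε ∈ {0,1}`,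
and `(t2)^↩ = t^↩` with its last `1` replaced by `0`. -/
def eraseWord (s : List (Fin 3)) : List Bool := s.foldl eraseStep []

/-- `t` is a (finite) prefix of the infinite word `x`. -/
def InfPrefix {α : Type*} (t : List α) (x : ℕ → α) : Prop :=
  ∀ i : Fin t.length, t.get i = x i.val

/-- The infinite word `x` is the limit of the sequence of finite words `s`: a finite word
is a prefix of `x` iff it is a prefix of `s m` for all sufficiently large `m`. -/
def IsLimitOf (x : ℕ → Bool) (s : ℕ → List Bool) : Prop :=
  ∀ t : List Bool, InfPrefix t x ↔ ∀ᶠ m in Filter.atTop, t <+: s m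

/-- The erasure `e(α) := lim_n (α↾n)^↩` of an infinite word over `3 = {0,1,2}` (an arbitrary
value is returned if the limit does not exist; for `α ∈ T ∩ 3^ω` it always exists). -/
noncomputable def eMap (α : ℕ → Fin 3) : ℕ → Bool :=
  if h : ∃ x : ℕ → Bool, IsLimitOf x (fun m => eraseWord (wordPrefix α m)) then h.choose
  else fun _ => false

/-- The language `E`: nonempty words `s ∈ T` with equally many `1`s and `2`s such that
the erasure of `s` minus its last letter begins with the letter `1`. -/
def Elang : Set (List (Fin 3)) :=
  { s | s ∈ Tfin ∧ s ≠ [] ∧ s.count 1 = s.count 2 ∧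
      (eraseWord (s.take (s.length - 1))).head? = some true }

/-- Finite concatenations of words from `S` (the Kleene star `S*`). -/
def starSet {α : Type*} (S : Set (List α)) : Set (List α) :=
  { s | ∃ L : List (List α), (∀ u ∈ L, u ∈ S) ∧ s = L.flatten }

/-- The language `A := {0} ∪ E ∪ { c_0 1 c_1 1 ⋯ c_k 1 : each c_j ∈ ({0} ∪ E)*, and
k > 0 or c_0 ≠ ∅ }`. -/
def Alang : Set (List (Fin 3)) :=
  {[(0 : Fin 3)]} ∪ Elang ∪
    { s | ∃ (k : ℕ) (c : ℕ → List (Fin 3)),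
        (∀ j ≤ k, c j ∈ starSet ({[(0 : Fin 3)]} ∪ Elang)) ∧
        (0 < k ∨ c 0 ≠ []) ∧
        s = (List.ofFn fun j : Fin (k + 1) => c j.val ++ [(1 : Fin 3)]).flatten }

/-- The infinite binary word `10^ω = 1000⋯`. -/
noncomputable def oneZeros : ℕ → Bool := fun n => decide (n = 0)

section Part1

lemma rfo_length (l : List Bool) : (replaceFirstOne l).length = l.length := by
  induction l with
  | nil => rfl
  | cons a t ih => cases a <;> simp [replaceFirstOne, ih]

lemma rlo_length (l : List Bool) : (replaceLastOne l).length = l.length := by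
  simp [replaceLastOne, rfo_length]

lemma rfo_false_prefix (k : ℕ) (t : List Bool) :
    replaceFirstOne (List.replicate k false ++ t) =
      List.replicate k false ++ replaceFirstOne t := by
  induction k with
  | zero => simp
  | succ k ih => simpa [List.replicate_succ, replaceFirstOne] using ih

lemma rlo_canonical (u : List Bool) (k : ℕ) :
    replaceLastOne (u ++ true :: List.replicate k false) =
      u ++ false :: List.replicate k false := by
  have h1 : (u ++ true :: List.replicate k false).reverse
      = List.replicate k false ++ true :: u.reverse := by
    simp [List.reverse_cons, List.reverse_append]
  have h2 : replaceFirstOne (List.replicate k false ++ true :: u.reverse)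
      = List.replicate k false ++ false :: u.reverse := by
    rw [rfo_false_prefix]; rfl
  simp [replaceLastOne, h1, h2, List.reverse_append]

lemma lastTrue_decomp (l : List Bool) (h : 1 ≤ l.count true) :
    ∃ u k, l = u ++ true :: List.replicate k false := by
  induction l using List.reverseRecOn with
  | nil => simp at h
  | append_singleton t a ih =>
    cases a with
    | true => exact ⟨t, 0, by simp⟩
    | false =>
      have ht : 1 ≤ t.count true := by simpa [List.count_append] using h
      obtain ⟨u, k, rfl⟩ := ih ht
      exact ⟨u, k + 1, by simp [List.replicate_succ']⟩

lemma eraseWord_append_singleton (t : List (Fin 3)) (a : Fin 3) :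
    eraseWord (t ++ [a]) = eraseStep (eraseWord t) a := by
  simp [eraseWord, List.foldl_append]

lemma eraseWord_length (t : List (Fin 3)) :
    (eraseWord t).length + t.count 2 = t.length := by
  induction t using List.reverseRecOn with
  | nil => rfl
  | append_singleton t a ih =>
    rw [eraseWord_append_singleton]
    by_cases ha : a = 2
    · subst ha
      simp only [eraseStep, if_pos rfl, List.count_append,  List.length_append,
        List.count_singleton', List.length_singleton, if_true, eq_self_iff_true, rlo_length]
      omega
    · simp only [eraseStep, if_neg ha, List.length_append, List.count_append,
        List.count_singleton', if_neg ha, List.length_singleton]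
      omega

lemma tfin_take {s : List (Fin 3)} (hs : s ∈ Tfin) (l : ℕ) : s.take l ∈ Tfin := by
  intro m
  rw [List.take_take]
  exact hs (min m l)

lemma tfin_count {s : List (Fin 3)} (hs : s ∈ Tfin) : s.count 2 ≤ s.count 1 := by
  have := hs s.length
  simpa using this

lemma tfin_append_left {s t : List (Fin 3)} (h : s ++ t ∈ Tfin) : s ∈ Tfin := by
  have := tfin_take h s.length
  simpa using this

lemma eraseWord_core (t : List (Fin 3)) (ht : t ∈ Tfin) :
    (eraseWord t).count true + t.count 2 = t.count 1 ∧
      ∀ acc, List.foldl eraseStep acc t = acc ++ eraseWord t := by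
  induction t using List.reverseRecOn with
  | nil => exact ⟨rfl, fun acc => by simp [eraseWord]⟩
  | append_singleton t a ih =>
    have ht' : t ∈ Tfin := tfin_append_left ht
    obtain ⟨ihc, ihf⟩ := ih ht'
    by_cases ha : a = 2
    · subst ha
      have hcnt : t.count 2 + 1 ≤ t.count 1 := by
        have := tfin_count ht
        simpa [List.count_append] using this
      have htrue : 1 ≤ (eraseWord t).count true := by omega
      obtain ⟨u, k, hu⟩ := lastTrue_decomp _ htrue
      have hrlo : eraseWord (t ++ [2]) = u ++ false :: List.replicate k false := by
        rw [eraseWord_append_singleton, hu]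
        simp only [eraseStep, if_pos rfl]
        exact rlo_canonical u k
      constructor
      · have h1 : (eraseWord t).count true = u.count true + 1 := by
          simp [hu, List.count_append, List.count_replicate]
        have h2 : (eraseWord (t ++ [2])).count true = u.count true := by
          simp [hrlo, List.count_append, List.count_replicate]
        simp only [List.count_append] at *
        simp only [h2]
        have : ([(2:Fin 3)].count 2 = 1) ∧ ([(2:Fin 3)].count 1 = 0) := by constructor <;> rfl
        omega
      · intro acc
        rw [List.foldl_append]
        rw [ihf acc]
        simp only [List.foldl_cons, List.foldl_nil, eraseStep, if_pos rfl]
        rw [hu, hrlo]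
        rw [show acc ++ (u ++ true :: List.replicate k false) = (acc ++ u) ++ true :: List.replicate k false by simp]
        rw [rlo_canonical (acc ++ u) k]
        simp
    · have hstep : ∀ l : List Bool, eraseStep l a = l ++ [decide (a = 1)] := by
        intro l; simp [eraseStep, ha]
      constructor
      · rw [eraseWord_append_singleton, hstep]
        simp only [List.count_append, List.count_singleton', if_neg ha]
        by_cases h1 : a = 1
        · subst h1
          simp
          omega
        · have hd : (decide (a = 1)) = false := by simp [h1]
          rw [hd]
          simp [h1]
          omega
      · intro acc
        rw [List.foldl_append, ihf acc]
        simp only [List.foldl_cons, List.foldl_nil, hstep, eraseWord_append_singleton]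
        simp

lemma eraseWord_count {t : List (Fin 3)} (ht : t ∈ Tfin) :
    (eraseWord t).count true + t.count 2 = t.count 1 :=
  (eraseWord_core t ht).1

lemma foldl_eraseStep {t : List (Fin 3)} (ht : t ∈ Tfin) (acc : List Bool) :
    List.foldl eraseStep acc t = acc ++ eraseWord t :=
  (eraseWord_core t ht).2 acc

lemma eraseWord_append {s t : List (Fin 3)} (ht : t ∈ Tfin) :
    eraseWord (s ++ t) = eraseWord s ++ eraseWord t := by
  rw [eraseWord, List.foldl_append, ← eraseWord, foldl_eraseStep ht]

lemma tfin_append {s t : List (Fin 3)} (hs : s ∈ Tfin) (ht : t ∈ Tfin) :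
    s ++ t ∈ Tfin := by
  intro l
  by_cases h : l ≤ s.length
  · rw [List.take_append_of_le_length h]
    exact hs l
  · rw [List.take_append, List.take_of_length_le (by omega : s.length ≤ l)]
    simp only [List.count_append]
    have := ht (l - s.length)
    have := tfin_count hs
    omega

end Part1
section Part2

/-- The segment `α[a..b)` of an infinite word. -/
def seg (α : ℕ → Fin 3) (a b : ℕ) : List (Fin 3) :=
  List.ofFn fun i : Fin (b - a) => α (a + i.val)

@[simp] lemma seg_length (α : ℕ → Fin 3) (a b : ℕ) : (seg α a b).length = b - a := by
  simp [seg]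

lemma seg_getElem (α : ℕ → Fin 3) (a b : ℕ) (i : ℕ) (h : i < (seg α a b).length) :
    (seg α a b)[i] = α (a + i) := by
  simp [seg]

@[simp] lemma seg_self (α : ℕ → Fin 3) (a : ℕ) : seg α a a = [] := by
  simp [seg]

lemma wordPrefix_eq_seg (α : ℕ → Fin 3) (l : ℕ) : wordPrefix α l = seg α 0 l := by
  apply List.ext_getElem <;> simp [wordPrefix, seg]

lemma seg_cat (α : ℕ → Fin 3) {a b c : ℕ} (hab : a ≤ b) (hbc : b ≤ c) :
    seg α a c = seg α a b ++ seg α b c := by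
  apply List.ext_getElem
  · simp; omega
  · intro i h1 h2
    rw [List.getElem_append]
    split
    · rw [seg_getElem, seg_getElem]
    · rw [seg_getElem, seg_getElem]
      simp only [seg_length]
      congr 1
      simp at *
      omega

lemma wordPrefix_cat (α : ℕ → Fin 3) {a b : ℕ} (hab : a ≤ b) :
    wordPrefix α b = wordPrefix α a ++ seg α a b := by
  rw [wordPrefix_eq_seg, wordPrefix_eq_seg, ← seg_cat α (Nat.zero_le a) hab]

lemma seg_take (α : ℕ → Fin 3) {a b c : ℕ} (hab : a ≤ b) (hbc : b ≤ c) :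
    (seg α a c).take (b - a) = seg α a b := by
  rw [seg_cat α hab hbc]
  rw [show b - a = (seg α a b).length by simp]
  exact List.take_left

lemma seg_single (α : ℕ → Fin 3) (a : ℕ) : seg α a (a + 1) = [α a] := by
  apply List.ext_getElem
  · simp
  · intro i h1 h2
    simp only [seg_length] at h1
    have : i = 0 := by omega
    subst this
    rw [seg_getElem]
    simp

lemma seg_succ (α : ℕ → Fin 3) {a b : ℕ} (hab : a ≤ b) :
    seg α a (b + 1) = seg α a b ++ [α b] := by
  rw [seg_cat α hab (Nat.le_succ b), seg_single]

/-- Prefixes of infinite words are prefixes of each other. -/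
lemma wordPrefix_take (α : ℕ → Fin 3) {a b : ℕ} (hab : a ≤ b) :
    (wordPrefix α b).take a = wordPrefix α a := by
  rw [wordPrefix_eq_seg, wordPrefix_eq_seg]
  simpa using seg_take α (Nat.zero_le a) hab

section LimMachine

variable {α : ℕ → Fin 3} {f : ℕ → ℕ}
variable (hf0 : f 0 = 0) (hmono : StrictMono f)
variable (hblocks : ∀ k, seg α (f k) (f (k + 1)) ∈ Tfin)

include hf0 hmono hblocks
set_option linter.unusedSectionVars false

lemma lim_blockcat : ∀ {k j : ℕ}, k ≤ j → seg α (f k) (f j) ∈ Tfin := by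
  intro k j hkj
  induction j with
  | zero =>
    have : k = 0 := Nat.le_zero.mp hkj
    subst this; simp; intro l; simp
  | succ j ih =>
    rcases Nat.lt_or_ge k (j + 1) with h | h
    · have hkj' : k ≤ j := by omega
      rw [seg_cat α (hmono.monotone hkj') (hmono.monotone (Nat.le_succ j))]
      exact tfin_append (ih hkj') (hblocks j)
    · have : k = j + 1 := by omega
      subst this; simp; intro l; simp

lemma lim_prefix_tfin : ∀ m, wordPrefix α m ∈ Tfin := by
  intro m
  have hm : m ≤ f m := by
    exact hmono.le_apply
  have h1 : wordPrefix α (f m) ∈ Tfin := by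
    rw [wordPrefix_eq_seg, show (0:ℕ) = f 0 from hf0.symm]
    exact lim_blockcat hf0 hmono hblocks (Nat.zero_le m)
  rw [← wordPrefix_take α hm]
  exact tfin_take h1 m

lemma lim_tinf : α ∈ Tinf := fun l => tfin_count (lim_prefix_tfin hf0 hmono hblocks l)

/-- For `m ≥ f k`, the erased prefix at `f k` is a prefix of the erased prefix at `m`. -/
lemma lim_erase_prefix {k m : ℕ} (hm : f k ≤ m) :
    eraseWord (wordPrefix α (f k)) <+: eraseWord (wordPrefix α m) := by
  -- find j with f j ≤ m < f (j+1), k ≤ j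
  have hex : ∃ j, m < f j := ⟨m + 1, by have : m + 1 ≤ f (m + 1) := hmono.le_apply; omega⟩
  classical
  set J := Nat.find hex with hJ
  have hJpos : 0 < J := by
    rcases Nat.eq_zero_or_pos J with h | h
    · have := Nat.find_spec hex
      rw [← hJ, h, hf0] at this
      omega
    · exact h
  set j := J - 1 with hj
  have hfj : f j ≤ m := by
    have := Nat.find_min hex (m := j) (by omega)
    omega
  have hfj1 : m < f (j + 1) := by
    have := Nat.find_spec hex
    rw [← hJ] at this
    have : m < f J := this
    rwa [show j + 1 = J by omega]
  have hkj : k ≤ j := by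
    by_contra h
    have : j < k := by omega
    have := hmono.monotone (show j + 1 ≤ k by omega)
    omega
  -- decompose
  have h1 : wordPrefix α m = wordPrefix α (f k) ++ (seg α (f k) (f j) ++ seg α (f j) m) := by
    rw [← List.append_assoc, ← wordPrefix_cat α (hmono.monotone hkj), ← wordPrefix_cat α hfj]
  have h2 : seg α (f k) (f j) ∈ Tfin := lim_blockcat hf0 hmono hblocks hkj
  have h3 : seg α (f j) m ∈ Tfin := by
    have : (seg α (f j) (f (j+1))).take (m - f j) = seg α (f j) m := seg_take α hfj (le_of_lt hfj1)
    rw [← this]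
    exact tfin_take (hblocks j) _
  rw [h1, eraseWord_append (tfin_append h2 h3)]
  exact ⟨_, rfl⟩

end LimMachine

lemma infPrefix_wordPrefixBool (x : ℕ → Bool) (n : ℕ) :
    InfPrefix (List.ofFn fun i : Fin n => x i.val) x := by
  intro i
  simp [List.get_ofFn]

lemma isLimitOf_unique {x y : ℕ → Bool} {s : ℕ → List Bool}
    (hx : IsLimitOf x s) (hy : IsLimitOf y s) : x = y := by
  funext n
  set t : List Bool := List.ofFn fun i : Fin (n + 1) => x i.val with ht
  have h1 : InfPrefix t x := infPrefix_wordPrefixBool x (n + 1)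
  have h2 : InfPrefix t y := (hy t).mpr ((hx t).mp h1)
  have e1 := h1 ⟨n, by simp [ht]⟩
  have e2 := h2 ⟨n, by simp [ht]⟩
  rw [e1] at e2
  simpa using e2

lemma eMap_eq_of_isLimitOf {α : ℕ → Fin 3} {x : ℕ → Bool}
    (hx : IsLimitOf x (fun m => eraseWord (wordPrefix α m))) : eMap α = x := by
  rw [eMap, dif_pos ⟨x, hx⟩]
  exact isLimitOf_unique (Exists.choose_spec (⟨x, hx⟩ :
    ∃ x : ℕ → Bool, IsLimitOf x (fun m => eraseWord (wordPrefix α m)))) hx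

end Part2
section Part3

/-- The limit word of a block factorization. -/
noncomputable def limX (α : ℕ → Fin 3) (f : ℕ → ℕ) : ℕ → Bool :=
  fun n => (eraseWord (wordPrefix α (f (n + 1)))).getD n false

section LimMachine2

variable {α : ℕ → Fin 3} {f : ℕ → ℕ}
variable (hf0 : f 0 = 0) (hmono : StrictMono f)
variable (hblocks : ∀ k, seg α (f k) (f (k + 1)) ∈ Tfin)
variable (hne : ∀ k, 1 ≤ (eraseWord (seg α (f k) (f (k + 1)))).length)

include hf0 hmono hblocks hne
set_option linter.unusedSectionVars false

lemma lim_len : ∀ k, k ≤ (eraseWord (wordPrefix α (f k))).length := by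
  intro k
  induction k with
  | zero => omega
  | succ k ih =>
    rw [wordPrefix_cat α (hmono.monotone (Nat.le_succ k)), eraseWord_append (hblocks k),
      List.length_append]
    have := hne k
    omega

lemma lim_stable {n m : ℕ} (hm : f (n + 1) ≤ m) :
    n < (eraseWord (wordPrefix α m)).length ∧
      (eraseWord (wordPrefix α m)).getD n false = limX α f n := by
  have hp := lim_erase_prefix hf0 hmono hblocks (k := n + 1) hm
  have hlen : n < (eraseWord (wordPrefix α (f (n + 1)))).length := by
    have := lim_len hf0 hmono hblocks hne (n + 1)
    omega
  have hlen2 : n < (eraseWord (wordPrefix α m)).length :=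
    lt_of_lt_of_le hlen hp.length_le
  refine ⟨hlen2, ?_⟩
  rw [List.getD_eq_getElem _ _ hlen2, limX, List.getD_eq_getElem _ _ hlen]
  exact (hp.getElem hlen).symm

lemma lim_isLimitOf : IsLimitOf (limX α f) (fun m => eraseWord (wordPrefix α m)) := by
  intro t
  constructor
  · intro hpre
    rw [Filter.eventually_atTop]
    refine ⟨f (t.length + 1), fun m hm => ?_⟩
    show t <+: eraseWord (wordPrefix α m)
    have hmge : ∀ i : ℕ, i < t.length → f (i + 1) ≤ m := by
      intro i hi
      exact le_trans (hmono.monotone (by omega)) hm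
    rw [List.prefix_iff_eq_take]
    apply List.ext_getElem
    · rw [List.length_take]
      have := (lim_stable hf0 hmono hblocks hne (n := t.length) (m := m)
        (le_trans (le_refl _) hm)).1
      omega
    · intro i h1 h2
      obtain ⟨hl, hv⟩ := lim_stable hf0 hmono hblocks hne (n := i) (m := m) (hmge i h1)
      rw [List.getElem_take]
      have := hpre ⟨i, h1⟩
      simp only [List.get_eq_getElem] at this
      rw [this]
      rw [List.getD_eq_getElem _ _ hl] at hv
      exact hv.symm
  · intro hev
    intro ⟨i, hi⟩
    rw [Filter.eventually_atTop] at hev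
    obtain ⟨M, hM⟩ := hev
    set m := max M (f (i + 1)) with hmdef
    have h1 : t <+: eraseWord (wordPrefix α m) := hM m (le_max_left _ _)
    obtain ⟨hl, hv⟩ := lim_stable hf0 hmono hblocks hne (n := i) (m := m) (le_max_right _ _)
    simp only [List.get_eq_getElem]
    rw [← hv, List.getD_eq_getElem _ _ hl]
    exact h1.getElem hi

lemma lim_eMap : eMap α = limX α f :=
  eMap_eq_of_isLimitOf (lim_isLimitOf hf0 hmono hblocks hne)

/-- Values of the limit word inside the first block. -/
lemma lim_first_block {n : ℕ} (hn : n < (eraseWord (seg α 0 (f 1))).length) :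
    limX α f n = (eraseWord (seg α 0 (f 1))).getD n false := by
  have h0 : seg α 0 (f 1) = wordPrefix α (f 1) := by
    rw [wordPrefix_eq_seg]
  have hp : eraseWord (wordPrefix α (f 1)) <+: eraseWord (wordPrefix α (f (n + 2))) := by
    apply lim_erase_prefix hf0 hmono hblocks (k := 1)
    exact hmono.monotone (by omega)
  rw [h0] at hn ⊢
  have := (lim_stable hf0 hmono hblocks hne (n := n) (m := f (n + 2))
    (hmono.monotone (by omega))).2
  rw [← this]
  rw [List.getD_eq_getElem _ _ (lt_of_lt_of_le hn hp.length_le),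
    List.getD_eq_getElem _ _ hn]
  exact (hp.getElem hn).symm

end LimMachine2

end Part3
section Part4

lemma erase_len_pos {s : List (Fin 3)} (hs : s ∈ Tfin) (hne : s ≠ []) :
    1 ≤ (eraseWord s).length := by
  have hlen := eraseWord_length s
  have hcount := tfin_count hs
  rcases Nat.lt_or_ge (s.count 2) s.length with h | h
  · omega
  · exfalso
    have h2 : s.count 2 = s.length := le_antisymm List.count_le_length h
    have hall : ∀ b ∈ s, 2 = b := (List.count_eq_length).mp h2
    have h1 : s.count 1 = 0 := by
      rw [List.count_eq_zero]
      intro hmem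
      exact absurd (hall _ hmem).symm (by decide)
    have : s.length = 0 := by omega
    exact hne (List.eq_nil_of_length_eq_zero this)

lemma singleton_tfin {a : Fin 3} (ha : a ≠ 2) : [a] ∈ Tfin := by
  intro l
  cases l with
  | zero => simp
  | succ l =>
    rw [List.take_of_length_le (by simp)]
    simp only [List.count_singleton', if_neg ha]
    split <;> omega

lemma zeroE_spec {s : List (Fin 3)} (hs : s ∈ ({[(0 : Fin 3)]} : Set (List (Fin 3))) ∪ Elang) :
    s ∈ Tfin ∧ s ≠ [] ∧ s.count 1 = s.count 2 ∧ (eraseWord s).count true = 0 := by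
  rcases hs with hs | hs
  · rw [Set.mem_singleton_iff] at hs; subst hs
    exact ⟨singleton_tfin (by decide), by simp, by decide, by decide⟩
  · obtain ⟨h1, h2, h3, _⟩ := hs
    refine ⟨h1, h2, h3, ?_⟩
    have := eraseWord_count h1
    omega

lemma eraseWord_nil : eraseWord [] = [] := rfl

lemma star_spec {c : List (Fin 3)} (hc : c ∈ starSet (({[(0 : Fin 3)]} : Set (List (Fin 3))) ∪ Elang)) :
    c ∈ Tfin ∧ c.count 1 = c.count 2 ∧ (eraseWord c).count true = 0 := by
  obtain ⟨L, hL, rfl⟩ := hc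
  induction L with
  | nil => exact ⟨fun l => by simp, by simp, by simp [eraseWord_nil]⟩
  | cons u L ih =>
    have hu := zeroE_spec (hL u (by simp))
    have hrest := ih (fun v hv => hL v (by simp [hv]))
    rw [List.flatten_cons]
    refine ⟨tfin_append hu.1 hrest.1, ?_, ?_⟩
    · simp only [List.count_append]
      omega
    · rw [eraseWord_append hrest.1]
      simp only [List.count_append]
      omega

/-- The third kind of word in `A`. -/
def wThird (k : ℕ) (c : ℕ → List (Fin 3)) : List (Fin 3) :=
  (List.ofFn fun j : Fin (k + 1) => c j.val ++ [(1 : Fin 3)]).flatten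

lemma wThird_zero (c : ℕ → List (Fin 3)) : wThird 0 c = c 0 ++ [1] := by
  simp [wThird]

lemma wThird_succ (k : ℕ) (c : ℕ → List (Fin 3)) :
    wThird (k + 1) c = (c 0 ++ [1]) ++ wThird k (fun j => c (j + 1)) := by
  simp [wThird, List.ofFn_succ]

lemma eraseWord_one : eraseWord [(1 : Fin 3)] = [true] := by decide

lemma wThird_tfin : ∀ (k : ℕ) (c : ℕ → List (Fin 3)),
    (∀ j ≤ k, c j ∈ starSet (({[(0 : Fin 3)]} : Set (List (Fin 3))) ∪ Elang)) →
    wThird k c ∈ Tfin := by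
  intro k
  induction k with
  | zero =>
    intro c hc
    rw [wThird_zero]
    exact tfin_append (star_spec (hc 0 le_rfl)).1 (singleton_tfin (by decide))
  | succ k ih =>
    intro c hc
    rw [wThird_succ]
    exact tfin_append
      (tfin_append (star_spec (hc 0 (by omega))).1 (singleton_tfin (by decide)))
      (ih _ (fun j hj => hc (j + 1) (by omega)))

lemma wThird_ne_nil (k : ℕ) (c : ℕ → List (Fin 3)) : wThird k c ≠ [] := by
  cases k with
  | zero => rw [wThird_zero]; simp
  | succ k => rw [wThird_succ]; simp

/-- decomposition of `wThird` as `c 0 ++ ([1] ++ R)` with `[1] ++ R ∈ Tfin`. -/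
lemma wThird_decomp (k : ℕ) (c : ℕ → List (Fin 3))
    (hc : ∀ j ≤ k, c j ∈ starSet (({[(0 : Fin 3)]} : Set (List (Fin 3))) ∪ Elang)) :
    ∃ R : List (Fin 3), wThird k c = c 0 ++ ([1] ++ R) ∧ ([(1 : Fin 3)] ++ R) ∈ Tfin ∧
      R ∈ Tfin := by
  cases k with
  | zero =>
    exact ⟨[], by simp [wThird_zero], by simpa using singleton_tfin (by decide),
      fun l => by simp⟩
  | succ k =>
    refine ⟨wThird k (fun j => c (j + 1)), by simpa [List.append_assoc] using wThird_succ k c, ?_, ?_⟩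
    · exact tfin_append (singleton_tfin (by decide))
        (wThird_tfin k _ (fun j hj => hc (j + 1) (by omega)))
    · exact wThird_tfin k _ (fun j hj => hc (j + 1) (by omega))

lemma all_false_getD {l : List Bool} (h : l.count true = 0) (n : ℕ) :
    l.getD n false = false := by
  rcases Nat.lt_or_ge n l.length with hn | hn
  · rw [List.getD_eq_getElem _ _ hn]
    have hmem := List.getElem_mem hn
    rcases Bool.eq_false_or_eq_true l[n] with h' | h'
    · rw [List.count_eq_zero] at h
      rw [h'] at hmem
      exact absurd hmem h
    · exact h'
  · exact List.getD_eq_default _ _ hn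

lemma Alang_spec {w : List (Fin 3)} (hw : w ∈ Alang) :
    w ∈ Tfin ∧ 1 ≤ (eraseWord w).length := by
  rcases hw with (hw | hw) | hw
  · have := zeroE_spec (Or.inl hw)
    exact ⟨this.1, erase_len_pos this.1 this.2.1⟩
  · have := zeroE_spec (Or.inr hw)
    exact ⟨this.1, erase_len_pos this.1 this.2.1⟩
  · obtain ⟨k, c, hc, hcond, rfl⟩ := hw
    have h1 : wThird k c ∈ Tfin := wThird_tfin k c hc
    exact ⟨h1, erase_len_pos h1 (wThird_ne_nil k c)⟩

/-- Key analysis of the first letter of the erasure of an `A`-word. -/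
lemma Alang_first {w : List (Fin 3)} (hw : w ∈ Alang) :
    (eraseWord w).getD 0 false = false ∨
      ∃ p, 1 ≤ p ∧ p < (eraseWord w).length ∧ (eraseWord w).getD p false = true := by
  rcases hw with (hw | hw) | hw
  · exact Or.inl (all_false_getD (zeroE_spec (Or.inl hw)).2.2.2 0)
  · exact Or.inl (all_false_getD (zeroE_spec (Or.inr hw)).2.2.2 0)
  · obtain ⟨k, c, hc, hcond, rfl⟩ := hw
    have hwdef : (List.ofFn fun j : Fin (k + 1) => c j.val ++ [(1 : Fin 3)]).flatten
        = wThird k c := rfl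
    rw [hwdef]
    by_cases hc0 : c 0 = []
    · -- then k > 0
      right
      have hk : 0 < k := by
        rcases hcond with h | h
        · exact h
        · exact absurd hc0 h
      obtain ⟨k, rfl⟩ : ∃ k', k = k' + 1 := ⟨k - 1, by omega⟩
      set c' : ℕ → List (Fin 3) := fun j => c (j + 1) with hc'
      have hc'star : ∀ j ≤ k, c' j ∈ starSet (({[(0 : Fin 3)]} : Set (List (Fin 3))) ∪ Elang) :=
        fun j hj => hc (j + 1) (by omega)
      obtain ⟨R, hR, hRt, hRt'⟩ := wThird_decomp k c' hc'star
      have hw1 : wThird (k + 1) c = [1] ++ (c' 0 ++ ([1] ++ R)) := by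
        rw [wThird_succ, hc0, ← hR]
        simp
        rfl
      have hc'0 := star_spec (hc'star 0 (by omega))
      have he : eraseWord (wThird (k + 1) c) =
          (true :: eraseWord (c' 0)) ++ (true :: eraseWord R) := by
        rw [hw1, eraseWord_append (tfin_append hc'0.1 hRt),
          eraseWord_append hRt, eraseWord_append hRt', eraseWord_one]
        simp
      refine ⟨1 + (eraseWord (c' 0)).length, by omega, ?_, ?_⟩
      · rw [he]; simp; omega
      · rw [he]
        have hidx : 1 + (eraseWord (c' 0)).length
            = (true :: eraseWord (c' 0)).length := by simp; omega
        rw [hidx]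
        rw [List.getD_eq_getElem _ _ (by simp)]
        rw [List.getElem_append_right (le_refl _)]
        simp
    · -- c 0 ≠ []
      left
      obtain ⟨R, hR, hRt, _⟩ := wThird_decomp k c hc
      have hstar := star_spec (hc 0 (by omega))
      have he : eraseWord (wThird k c) = eraseWord (c 0) ++ eraseWord ([1] ++ R) := by
        rw [hR, eraseWord_append hRt]
      have hlen : 1 ≤ (eraseWord (c 0)).length := erase_len_pos hstar.1 hc0
      rw [he, List.getD_eq_getElem _ _ (by simp; omega), List.getElem_append_left (by omega)]
      have := all_false_getD hstar.2.2 0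
      rwa [List.getD_eq_getElem _ _ (by omega)] at this

/-- The forward inclusion. -/
lemma forward_incl {α : ℕ → Fin 3} (h : α ∈ omegaPower Alang) :
    α ∈ Tinf ∧ eMap α ≠ oneZeros := by
  obtain ⟨f, hf0, hmono, hA⟩ := h
  have hA' : ∀ k, seg α (f k) (f (k + 1)) ∈ Alang := fun k => hA k
  have hblocks : ∀ k, seg α (f k) (f (k + 1)) ∈ Tfin := fun k => (Alang_spec (hA' k)).1
  have hne : ∀ k, 1 ≤ (eraseWord (seg α (f k) (f (k + 1)))).length :=
    fun k => (Alang_spec (hA' k)).2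
  refine ⟨lim_tinf hf0 hmono hblocks, ?_⟩
  rw [lim_eMap hf0 hmono hblocks hne]
  have hseg0 : seg α 0 (f 1) = seg α (f 0) (f 1) := by rw [hf0]
  rcases Alang_first (hA' 0) with hcase | ⟨p, hp1, hp2, hp3⟩
  · intro heq
    have h0 : limX α f 0 = false := by
      rw [lim_first_block hf0 hmono hblocks hne (n := 0) (by rw [hseg0]; exact hne 0), hseg0]
      exact hcase
    have := congrFun heq 0
    rw [h0] at this
    simp [oneZeros] at this
  · intro heq
    have h0 : limX α f p = true := by
      rw [lim_first_block hf0 hmono hblocks hne (n := p) (by rw [hseg0]; exact hp2), hseg0]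
      exact hp3
    have := congrFun heq p
    rw [h0] at this
    simp [oneZeros] at this
    omega

end Part4
section Part5

variable (α : ℕ → Fin 3)

/-- Number of occurrences of `x` among the first `n` letters. -/
def cnt (x : Fin 3) (n : ℕ) : ℕ := (wordPrefix α n).count x

/-- The stack height after `n` letters. -/
def hgt (n : ℕ) : ℤ := (cnt α 1 n : ℤ) - (cnt α 2 n : ℤ)

/-- Position `q` carries a permanent `1`. -/
def Perm (q : ℕ) : Prop := α q = 1 ∧ ∀ m, q < m → hgt α (q + 1) ≤ hgt α m

/-- `n` is a low point: the height never goes below its value at `n` afterwards. -/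
def Low (n : ℕ) : Prop := ∀ m, n ≤ m → hgt α n ≤ hgt α m

/-- The cut after position `n`: the matching time of the `1` at position `n`,
or `n+1` otherwise. -/
noncomputable def nextCut (n : ℕ) : ℕ :=
  if h : α n = 1 ∧ ∃ m, n < m ∧ hgt α m ≤ hgt α n then Nat.find h.2 else n + 1

variable {α}

lemma fin3_cases (a : Fin 3) : a = 0 ∨ a = 1 ∨ a = 2 := by
  fin_cases a <;> simp

@[simp] lemma cnt_zero (x : Fin 3) : cnt α x 0 = 0 := by
  simp [cnt, wordPrefix]

lemma wordPrefix_succ (n : ℕ) : wordPrefix α (n + 1) = wordPrefix α n ++ [α n] := by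
  rw [wordPrefix_cat α (Nat.le_succ n), seg_single]

lemma cnt_succ (x : Fin 3) (n : ℕ) :
    cnt α x (n + 1) = cnt α x n + if α n = x then 1 else 0 := by
  rw [cnt, wordPrefix_succ, List.count_append, List.count_singleton', cnt]

lemma cnt_seg (x : Fin 3) {a b : ℕ} (h : a ≤ b) :
    cnt α x a + (seg α a b).count x = cnt α x b := by
  rw [cnt, cnt, wordPrefix_cat α h, List.count_append]

lemma hgt_zero : hgt α 0 = 0 := by simp [hgt]

lemma hgt_succ_0 {n : ℕ} (h : α n = 0) : hgt α (n + 1) = hgt α n := by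
  simp [hgt, cnt_succ, h]

lemma hgt_succ_1 {n : ℕ} (h : α n = 1) : hgt α (n + 1) = hgt α n + 1 := by
  simp [hgt, cnt_succ, h]
  ring

lemma hgt_succ_2 {n : ℕ} (h : α n = 2) : hgt α (n + 1) = hgt α n - 1 := by
  simp [hgt, cnt_succ, h]
  push_cast
  ring

lemma hgt_nonneg (hT : α ∈ Tinf) (n : ℕ) : 0 ≤ hgt α n := by
  have := hT n
  simp only [hgt]
  have : cnt α 2 n ≤ cnt α 1 n := hT n
  omega

lemma low_not_two (hlow : Low α n) : α n ≠ 2 := by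
  intro h
  have := hlow (n + 1) (Nat.le_succ n)
  rw [hgt_succ_2 h] at this
  omega

lemma low_succ_of_zero (hlow : Low α n) (h : α n = 0) : Low α (n + 1) := by
  intro m hm
  rw [hgt_succ_0 h]
  exact hlow m (by omega)

lemma nextCut_zero {n : ℕ} (h : α n = 0) : nextCut α n = n + 1 := by
  rw [nextCut, dif_neg]
  rintro ⟨h1, -⟩
  rw [h] at h1
  exact absurd h1 (by decide)

lemma nextCut_spec {n : ℕ} (hlow : Low α n) (h1 : α n = 1) (hnp : ¬ Perm α n) :
    n < nextCut α n ∧ hgt α (nextCut α n) = hgt α n ∧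
      (∀ l, n < l → l < nextCut α n → hgt α n + 1 ≤ hgt α l) ∧ Low α (nextCut α n) := by
  have hex : ∃ m, n < m ∧ hgt α m ≤ hgt α n := by
    rw [Perm] at hnp
    push_neg at hnp
    obtain ⟨m, hm1, hm2⟩ := hnp h1
    exact ⟨m, hm1, by rw [hgt_succ_1 h1] at hm2; omega⟩
  have hcond : α n = 1 ∧ ∃ m, n < m ∧ hgt α m ≤ hgt α n := ⟨h1, hex⟩
  rw [nextCut, dif_pos hcond]
  obtain ⟨hlt, hle⟩ := Nat.find_spec hcond.2
  have heq : hgt α (Nat.find hcond.2) = hgt α n :=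
    le_antisymm hle (hlow _ (by omega))
  refine ⟨hlt, heq, ?_, ?_⟩
  · intro l hl1 hl2
    have := Nat.find_min hcond.2 hl2
    push_neg at this
    have := this hl1
    omega
  · intro m hm
    rw [heq]
    exact hlow m (by omega)

lemma seg_tfin {n m : ℕ} (h : ∀ l, n ≤ l → l ≤ m → hgt α n ≤ hgt α l) :
    seg α n m ∈ Tfin := by
  rcases Nat.lt_or_ge m n with hmn | hmn
  · have : m - n = 0 := by omega
    rw [seg, this]
    intro l; simp
  · intro l
    rcases Nat.lt_or_ge l (m - n) with hl | hl
    · have h1 : (seg α n m).take l = seg α n (n + l) := by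
        have := seg_take α (show n ≤ n + l by omega) (show n + l ≤ m by omega)
        rwa [show n + l - n = l by omega] at this
      rw [h1]
      have e1 := cnt_seg (α := α) 1 (show n ≤ n + l by omega)
      have e2 := cnt_seg (α := α) 2 (show n ≤ n + l by omega)
      have hh := h (n + l) (by omega) (by omega)
      simp only [hgt] at hh
      omega
    · rw [List.take_of_length_le (by simp; omega)]
      have e1 := cnt_seg (α := α) 1 hmn
      have e2 := cnt_seg (α := α) 2 hmn
      have hh := h m (by omega) (by omega)
      simp only [hgt] at hh
      omega

lemma block_Elang {n m : ℕ} (h1 : α n = 1) (hm : n < m) (heq : hgt α m = hgt α n)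
    (hbet : ∀ l, n < l → l < m → hgt α n + 1 ≤ hgt α l) :
    seg α n m ∈ Elang := by
  have hm2 : n + 2 ≤ m := by
    rcases Nat.lt_or_ge (n + 1) m with h | h
    · omega
    · exfalso
      have : m = n + 1 := by omega
      rw [this, hgt_succ_1 h1] at heq
      omega
  have htfin : seg α n m ∈ Tfin := by
    apply seg_tfin
    intro l hl1 hl2
    rcases eq_or_lt_of_le hl1 with rfl | hl1'
    · exact le_refl _
    · rcases eq_or_lt_of_le hl2 with heq2 | hl2'
      · rw [heq2, heq]
      · have := hbet l hl1' hl2'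
        omega
  refine ⟨htfin, ?_, ?_, ?_⟩
  · -- nonempty
    intro hnil
    have hlen0 : (seg α n m).length = 0 := by rw [hnil]; rfl
    rw [seg_length] at hlen0
    omega
  · -- balanced
    have e1 := cnt_seg (α := α) 1 (le_of_lt hm)
    have e2 := cnt_seg (α := α) 2 (le_of_lt hm)
    simp only [hgt] at heq
    omega
  · -- head of erasure of all but last letter
    have hlen : (seg α n m).length = m - n := by simp
    have htake : (seg α n m).take ((seg α n m).length - 1) = seg α n (m - 1) := by
      rw [hlen]
      have := seg_take α (show n ≤ m - 1 by omega) (show m - 1 ≤ m by omega)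
      rwa [show m - 1 - n = m - n - 1 by omega] at this
    rw [htake]
    have hsplit : seg α n (m - 1) = [α n] ++ seg α (n + 1) (m - 1) := by
      rw [← seg_single α n]
      exact seg_cat α (show n ≤ n + 1 by omega) (show n + 1 ≤ m - 1 by omega)
    have hu : seg α (n + 1) (m - 1) ∈ Tfin := by
      apply seg_tfin
      intro l hl1 hl2
      rw [hgt_succ_1 h1]
      rcases eq_or_lt_of_le hl1 with rfl | hl1'
      · rw [hgt_succ_1 h1]
      · have := hbet l (by omega) (by omega)
        omega
    rw [hsplit, h1, eraseWord_append hu, eraseWord_one]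
    simp

end Part5
section Part6

lemma star_nil' : ([] : List (Fin 3)) ∈ starSet (({[(0 : Fin 3)]} : Set (List (Fin 3))) ∪ Elang) :=
  ⟨[], by simp, rfl⟩

lemma star_cons {u v : List (Fin 3)} {S : Set (List (Fin 3))} (hu : u ∈ S)
    (hv : v ∈ starSet S) : u ++ v ∈ starSet S := by
  obtain ⟨L, hL, rfl⟩ := hv
  refine ⟨u :: L, ?_, by simp⟩
  intro w hw
  rcases List.mem_cons.mp hw with rfl | hw
  · exact hu
  · exact hL _ hw

lemma zero_mem_zeroE : [(0 : Fin 3)] ∈ ({[(0 : Fin 3)]} : Set (List (Fin 3))) ∪ Elang :=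
  Or.inl rfl

/-- The gap between a low point and the next permanent position is in `({0} ∪ E)*`. -/
lemma gap_star {α : ℕ → Fin 3} {p : ℕ} (hp : Perm α p) :
    ∀ d n, p - n = d → Low α n → n ≤ p → (∀ l, n ≤ l → l < p → ¬ Perm α l) →
    seg α n p ∈ starSet (({[(0 : Fin 3)]} : Set (List (Fin 3))) ∪ Elang) ∧
      hgt α p = hgt α n := by
  intro d
  induction d using Nat.strong_induction_on with
  | _ d ih =>
    intro n hd hlow hnp hnoperm
    rcases eq_or_lt_of_le hnp with heqnp | hlt
    · rw [← heqnp, seg_self]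
      exact ⟨star_nil', by rw [heqnp]⟩
    · have hne2 := low_not_two hlow
      rcases fin3_cases (α n) with h0 | h1 | h2
      · -- letter 0
        have hrec := ih (p - (n + 1)) (by omega) (n + 1) rfl (low_succ_of_zero hlow h0)
          (by omega) (fun l hl1 hl2 => hnoperm l (by omega) hl2)
        have hsplit : seg α n p = [α n] ++ seg α (n + 1) p := by
          rw [← seg_single α n]
          exact seg_cat α (by omega) (by omega)
        constructor
        · rw [hsplit, h0]
          exact star_cons zero_mem_zeroE hrec.1
        · rw [hrec.2, hgt_succ_0 h0]
      · -- letter 1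
        have hnpn : ¬ Perm α n := hnoperm n le_rfl hlt
        obtain ⟨hlt', heq', hbet', hlow'⟩ := nextCut_spec hlow h1 hnpn
        set m := nextCut α n with hm
        have hmp : m ≤ p := by
          by_contra hcon
          push_neg at hcon
          have hbp : hgt α n + 1 ≤ hgt α p := hbet' p hlt hcon
          have hp1 : hgt α (p + 1) = hgt α p + 1 := hgt_succ_1 hp.1
          have := hp.2 m (by omega)
          omega
        have hblock : seg α n m ∈ Elang := block_Elang h1 hlt' heq' hbet'
        have hrec := ih (p - m) (by omega) m rfl hlow' hmp
          (fun l hl1 hl2 => hnoperm l (by omega) hl2)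
        constructor
        · rw [seg_cat α (le_of_lt hlt') hmp]
          exact star_cons (Or.inr hblock) hrec.1
        · rw [hrec.2, heq']
      · exact absurd h2 hne2

/-- Building the first block (covering all the permanent positions, finite case). -/
lemma third_build {α : ℕ → Fin 3} :
    ∀ d n p, p - n = d → Low α n → n ≤ p → Perm α p →
    ∃ k c, (∀ j ≤ k, c j ∈ starSet (({[(0 : Fin 3)]} : Set (List (Fin 3))) ∪ Elang)) ∧
      seg α n (p + 1) = wThird k c ∧ (0 < k ∨ c 0 = seg α n p) := by
  intro d
  induction d using Nat.strong_induction_on with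
  | _ d ih =>
    intro n p hd hlow hnp hp
    have hex : ∃ q, n ≤ q ∧ Perm α q := ⟨p, hnp, hp⟩
    set p₁ := Nat.find hex with hp₁def
    obtain ⟨hnp₁, hPp₁⟩ := Nat.find_spec hex
    have hp₁p : p₁ ≤ p := Nat.find_min' hex ⟨hnp, hp⟩
    have hnopm : ∀ l, n ≤ l → l < p₁ → ¬ Perm α l := by
      intro l hl1 hl2 hPl
      exact (Nat.find_min hex hl2) ⟨hl1, hPl⟩
    have hgap := gap_star hPp₁ (p₁ - n) n rfl hlow hnp₁ hnopm
    rcases eq_or_lt_of_le hp₁p with heqp | hltp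
    · -- only one permanent position left
      refine ⟨0, fun _ => seg α n p, fun j hj => by rw [← heqp]; exact hgap.1, ?_, Or.inr rfl⟩
      rw [wThird_zero]
      rw [seg_cat α (show n ≤ p by omega) (show p ≤ p + 1 by omega), seg_single, hp.1]
    · -- recurse after p₁
      have hlow' : Low α (p₁ + 1) := by
        intro m hm
        exact hPp₁.2 m (by omega)
      obtain ⟨k', c', hc'star, hc'seg, -⟩ :=
        ih (p - (p₁ + 1)) (by omega) (p₁ + 1) p rfl hlow' (by omega) hp
      refine ⟨k' + 1, fun j => if j = 0 then seg α n p₁ else c' (j - 1), ?_, ?_, Or.inl (by omega)⟩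
      · intro j hj
        by_cases hj0 : j = 0
        · simp only [hj0, if_pos rfl]
          exact hgap.1
        · simp only [if_neg hj0]
          exact hc'star (j - 1) (by omega)
      · rw [wThird_succ]
        have hshift : (fun j => if j + 1 = 0 then seg α n p₁ else c' (j + 1 - 1)) = c' := by
          funext j
          simp
        simp only [if_pos rfl, hshift]
        rw [← hc'seg]
        rw [seg_cat α (show n ≤ p₁ + 1 by omega) (show p₁ + 1 ≤ p + 1 by omega),
          seg_cat α (show n ≤ p₁ by omega) (show p₁ ≤ p₁ + 1 by omega), seg_single, hPp₁.1]
        simp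

/-- One step of the `({0} ∪ E)`-machine. -/
lemma machine_step {α : ℕ → Fin 3} {n : ℕ} (hlow : Low α n) (hnoperm : ¬ Perm α n) :
    n < nextCut α n ∧ Low α (nextCut α n) ∧
      seg α n (nextCut α n) ∈ ({[(0 : Fin 3)]} : Set (List (Fin 3))) ∪ Elang ∧
      hgt α (nextCut α n) = hgt α n := by
  rcases fin3_cases (α n) with h0 | h1 | h2
  · rw [nextCut_zero h0]
    refine ⟨by omega, low_succ_of_zero hlow h0, ?_, hgt_succ_0 h0⟩
    rw [seg_single, h0]
    exact zero_mem_zeroE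
  · obtain ⟨hlt, heq, hbet, hlow'⟩ := nextCut_spec hlow h1 hnoperm
    exact ⟨hlt, hlow', Or.inr (block_Elang h1 hlt heq hbet), heq⟩
  · exact absurd h2 (low_not_two hlow)

/-- The iterated machine. -/
lemma machine_iter {α : ℕ → Fin 3} {N : ℕ} (hlowN : Low α N)
    (hnoperm : ∀ q, N ≤ q → ¬ Perm α q) :
    ∀ i, Low α ((nextCut α)^[i] N) ∧ N ≤ (nextCut α)^[i] N ∧
      (nextCut α)^[i] N < (nextCut α)^[i + 1] N ∧
      seg α ((nextCut α)^[i] N) ((nextCut α)^[i + 1] N)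
        ∈ ({[(0 : Fin 3)]} : Set (List (Fin 3))) ∪ Elang ∧
      hgt α ((nextCut α)^[i] N) = hgt α N := by
  have key : ∀ i, Low α ((nextCut α)^[i] N) ∧ N ≤ (nextCut α)^[i] N ∧
      hgt α ((nextCut α)^[i] N) = hgt α N := by
    intro i
    induction i with
    | zero => exact ⟨hlowN, le_refl N, rfl⟩
    | succ i ihh =>
      obtain ⟨hl, hN, hh⟩ := ihh
      obtain ⟨h1, h2, h3, h4⟩ := machine_step hl (hnoperm _ hN)
      rw [Function.iterate_succ_apply']
      exact ⟨h2, by omega, by rw [h4, hh]⟩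
  intro i
  obtain ⟨hl, hN, hh⟩ := key i
  obtain ⟨h1, h2, h3, h4⟩ := machine_step hl (hnoperm _ hN)
  rw [Function.iterate_succ_apply']
  exact ⟨hl, hN, h1, h3, hh⟩

/-- Membership of third-kind words in `A`. -/
lemma wThird_mem_Alang {k : ℕ} {c : ℕ → List (Fin 3)}
    (hstar : ∀ j ≤ k, c j ∈ starSet (({[(0 : Fin 3)]} : Set (List (Fin 3))) ∪ Elang))
    (hcond : 0 < k ∨ c 0 ≠ []) : wThird k c ∈ Alang :=
  Or.inr ⟨k, c, hstar, hcond, rfl⟩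

/-- The block between a low point and the second following permanent position
(used when there are infinitely many permanent `1`s). -/
lemma pair_block {α : ℕ → Fin 3} {n : ℕ} (hlow : Low α n)
    (hinf : ∀ N : ℕ, ∃ q, N ≤ q ∧ Perm α q) :
    n < Nat.find (hinf (Nat.find (hinf n) + 1)) + 1 ∧
    Low α (Nat.find (hinf (Nat.find (hinf n) + 1)) + 1) ∧
    seg α n (Nat.find (hinf (Nat.find (hinf n) + 1)) + 1) ∈ Alang := by
  set p := Nat.find (hinf n) with hpdef
  obtain ⟨hnp, hPp⟩ := Nat.find_spec (hinf n)
  set p' := Nat.find (hinf (p + 1)) with hp'def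
  obtain ⟨hpp', hPp'⟩ := Nat.find_spec (hinf (p + 1))
  have hnop1 : ∀ l, n ≤ l → l < p → ¬ Perm α l := fun l hl1 hl2 hPl =>
    Nat.find_min (hinf n) hl2 ⟨hl1, hPl⟩
  have hg1 := gap_star hPp (p - n) n rfl hlow hnp hnop1
  have hlowp1 : Low α (p + 1) := fun m hm => hPp.2 m (by omega)
  have hnop2 : ∀ l, p + 1 ≤ l → l < p' → ¬ Perm α l := fun l hl1 hl2 hPl =>
    Nat.find_min (hinf (p + 1)) hl2 ⟨hl1, hPl⟩
  have hg2 := gap_star hPp' (p' - (p + 1)) (p + 1) rfl hlowp1 hpp' hnop2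
  have hlowp'1 : Low α (p' + 1) := fun m hm => hPp'.2 m (by omega)
  refine ⟨by omega, hlowp'1, ?_⟩
  have hseg : seg α n (p' + 1) =
      wThird 1 (fun j => if j = 0 then seg α n p else seg α (p + 1) p') := by
    rw [wThird_succ, wThird_zero]
    simp only [if_pos rfl, if_neg (by omega : (0 : ℕ) + 1 ≠ 0)]
    rw [seg_cat α (show n ≤ p + 1 by omega) (show p + 1 ≤ p' + 1 by omega),
        seg_cat α (show n ≤ p by omega) (show p ≤ p + 1 by omega),
        seg_cat α (show p + 1 ≤ p' by omega) (show p' ≤ p' + 1 by omega),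
        seg_single, seg_single, hPp.1, hPp'.1]
    simp
  rw [hseg]
  apply wThird_mem_Alang
  · intro j hj
    by_cases h0 : j = 0
    · simp only [h0, if_pos rfl]
      exact hg1.1
    · simp only [if_neg h0]
      exact hg2.1
  · exact Or.inl (by omega)

end Part6
section Part7

lemma zeroE_subset_Alang {s : List (Fin 3)}
    (h : s ∈ ({[(0 : Fin 3)]} : Set (List (Fin 3))) ∪ Elang) : s ∈ Alang :=
  Or.inl h

lemma converse_incl {α : ℕ → Fin 3} (hT : α ∈ Tinf) (hnemap : eMap α ≠ oneZeros) :
    α ∈ omegaPower Alang := by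
  classical
  have hlow0 : Low α 0 := by
    intro m hm
    rw [hgt_zero]
    exact hgt_nonneg hT m
  by_cases hinf : ∀ N : ℕ, ∃ q, N ≤ q ∧ Perm α q
  · -- infinitely many permanent 1s
    set step : ℕ → ℕ := fun n => Nat.find (hinf (Nat.find (hinf n) + 1)) + 1 with hstep
    have key : ∀ k, Low α (step^[k] 0) := by
      intro k
      induction k with
      | zero => exact hlow0
      | succ k ih =>
        rw [Function.iterate_succ_apply']
        exact (pair_block ih hinf).2.1
    refine ⟨fun k => step^[k] 0, rfl, ?_, ?_⟩
    · apply strictMono_nat_of_lt_succ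
      intro k
      rw [Function.iterate_succ_apply']
      exact (pair_block (key k) hinf).1
    · intro k
      show seg α (step^[k] 0) (step^[k + 1] 0) ∈ Alang
      rw [Function.iterate_succ_apply']
      exact (pair_block (key k) hinf).2.2
  · push_neg at hinf
    obtain ⟨N, hN⟩ := hinf
    by_cases hex : ∃ q, Perm α q
    · -- finitely many permanent 1s, at least one
      obtain ⟨q0, hq0⟩ := hex
      have hq0N : q0 ≤ N := by
        by_contra h
        exact hN q0 (by omega) hq0
      set qmax := Nat.findGreatest (fun q => Perm α q) N with hqmdef
      have hqmax : Perm α qmax := Nat.findGreatest_spec hq0N hq0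
      have hqmaxN : qmax ≤ N := Nat.findGreatest_le N
      have hnopermax : ∀ q, qmax < q → ¬ Perm α q := by
        intro q hq hPq
        rcases Nat.lt_or_ge q (N + 1) with h | h
        · exact Nat.findGreatest_is_greatest hq (by omega) hPq
        · exact hN q (by omega) hPq
      have hlowq1 : Low α (qmax + 1) := fun m hm => hqmax.2 m (by omega)
      have hnop1 : ∀ q, qmax + 1 ≤ q → ¬ Perm α q := fun q hq => hnopermax q (by omega)
      have hmach := machine_iter hlowq1 hnop1
      obtain ⟨k, c, hstar, hseg, hdisj⟩ :=
        third_build (qmax - 0) 0 qmax rfl hlow0 (by omega) hqmax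
      by_cases hgood : 0 < k ∨ c 0 ≠ []
      · -- the good case: produce the factorization
        refine ⟨fun j => match j with
          | 0 => 0
          | (j + 1) => (nextCut α)^[j] (qmax + 1), rfl, ?_, ?_⟩
        · apply strictMono_nat_of_lt_succ
          intro j
          match j with
          | 0 =>
            show 0 < (nextCut α)^[0] (qmax + 1)
            simp
          | (j + 1) =>
            show (nextCut α)^[j] (qmax + 1) < (nextCut α)^[j + 1] (qmax + 1)
            exact (hmach j).2.2.1
        · intro j
          match j with
          | 0 =>
            show seg α 0 ((nextCut α)^[0] (qmax + 1)) ∈ Alang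
            rw [Function.iterate_zero_apply]
            rw [hseg]
            exact wThird_mem_Alang hstar hgood
          | (j + 1) =>
            show seg α ((nextCut α)^[j] (qmax + 1)) ((nextCut α)^[j + 1] (qmax + 1)) ∈ Alang
            exact zeroE_subset_Alang (hmach j).2.2.2.1
      · -- the bad case: the erasure is 10^ω, contradiction
        exfalso
        push_neg at hgood
        obtain ⟨hk0', hc0⟩ := hgood
        have hk0 : k = 0 := by omega
        have hqmax0 : qmax = 0 := by
          rcases hdisj with h | h
          · omega
          · rw [hc0] at h
            have := congrArg List.length h
            simp at this
            omega
        rw [hqmax0] at hqmax hmach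
        -- the factorization [1], block, block, ...
        set f : ℕ → ℕ := fun j => match j with
          | 0 => 0
          | (j + 1) => (nextCut α)^[j] 1 with hfdef
        have hf0 : f 0 = 0 := rfl
        have hf1 : f 1 = 1 := rfl
        have hfs : ∀ j, f (j + 1) = (nextCut α)^[j] 1 := fun j => rfl
        have hmono : StrictMono f := by
          apply strictMono_nat_of_lt_succ
          intro j
          match j with
          | 0 => show 0 < (nextCut α)^[0] 1; simp
          | (j + 1) => exact (hmach j).2.2.1
        have hseg01 : seg α (f 0) (f 1) = [(1 : Fin 3)] := by
          rw [hf0, hf1, show (1 : ℕ) = 0 + 1 from rfl, seg_single, hqmax.1]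
        have hblocks : ∀ j, seg α (f j) (f (j + 1)) ∈ Tfin := by
          intro j
          match j with
          | 0 =>
            rw [hseg01]
            exact singleton_tfin (by decide)
          | (j + 1) => exact (zeroE_spec (hmach j).2.2.2.1).1
        have hlens : ∀ j, 1 ≤ (eraseWord (seg α (f j) (f (j + 1)))).length := by
          intro j
          match j with
          | 0 =>
            rw [hseg01, eraseWord_one]
            simp
          | (j + 1) =>
            have hsp := zeroE_spec (hmach j).2.2.2.1
            exact erase_len_pos hsp.1 hsp.2.1
        apply hnemap
        rw [lim_eMap hf0 hmono hblocks hlens]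
        funext n
        match n with
        | 0 =>
          have h0 := lim_first_block hf0 hmono hblocks hlens (n := 0)
            (by rw [hseg01, eraseWord_one]; simp)
          rw [limX] at h0 ⊢
          rw [h0, hseg01, eraseWord_one]
          simp [oneZeros]
        | (n + 1) =>
          have hv : wordPrefix α (f (n + 2)) ∈ Tfin := lim_prefix_tfin hf0 hmono hblocks (f (n + 2))
          have hf2 : 1 ≤ f (n + 2) := by
            have := hmono (show 1 < n + 2 by omega)
            rw [hf1] at this
            omega
          have hsegT : seg α 1 (f (n + 2)) ∈ Tfin := by
            have := lim_blockcat hf0 hmono hblocks (show 1 ≤ n + 2 by omega)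
            rwa [hf1] at this
          have hw1 : wordPrefix α 1 = [(1 : Fin 3)] := by
            rw [wordPrefix_succ]
            simp [wordPrefix, hqmax.1]
          have hsplit : wordPrefix α (f (n + 2)) = [(1 : Fin 3)] ++ seg α 1 (f (n + 2)) := by
            rw [wordPrefix_cat α hf2, hw1]
          have hv2 : eraseWord (wordPrefix α (f (n + 2))) = true :: eraseWord (seg α 1 (f (n + 2))) := by
            rw [hsplit, eraseWord_append hsegT, eraseWord_one]
            simp
          -- count of trues is 1
          have hcnt := eraseWord_count hv
          have hhgt : hgt α (f (n + 2)) = 1 := by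
            have := (hmach (n + 1)).2.2.2.2
            rw [← hfs (n + 1)] at this
            rw [this]
            have h1 : hgt α 1 = hgt α 0 + 1 := hgt_succ_1 hqmax.1
            rw [h1, hgt_zero]
            omega
          have hcnt2 : (eraseWord (wordPrefix α (f (n + 2)))).count true = 1 := by
            simp only [hgt, cnt] at hhgt
            omega
          have hcw : (eraseWord (seg α 1 (f (n + 2)))).count true = 0 := by
            rw [hv2] at hcnt2
            simp at hcnt2
            exact hcnt2
          rw [limX, hv2]
          simp only [List.getD_cons_succ]
          rw [all_false_getD hcw n]
          simp [oneZeros]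
    · -- no permanent 1s at all
      push_neg at hex
      have hmach := machine_iter hlow0 (fun q _ => hex q)
      refine ⟨fun k => (nextCut α)^[k] 0, rfl, ?_, ?_⟩
      · apply strictMono_nat_of_lt_succ
        intro k
        exact (hmach k).2.2.1
      · intro k
        show seg α ((nextCut α)^[k] 0) ((nextCut α)^[k + 1] 0) ∈ Alang
        exact zeroE_subset_Alang (hmach k).2.2.2.1

end Part7

/-- `A^ω = e^{-1}(2^ω \ {10^ω})`: the ω-power of `A` is exactly the set of `α ∈ T ∩ 3^ω`
whose erasure `e(α)` differs from the word `1000⋯`. -/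
theorem omegaPower_Alang :
    omegaPower Alang = { α : ℕ → Fin 3 | α ∈ Tinf ∧ eMap α ≠ oneZeros } := by
  ext α
  constructor
  · intro h
    exact forward_incl h
  · rintro ⟨hT, hne⟩
    exact converse_incl hT hne
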